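/- Let P be a nontrivial permutation of {1,...,n} and let σ be a product of transpositions in S_{n+2}, each moving at least one of x = n+1 or y = n+2, such that σ · P is the identity (where P is viewed in S_{n+2} fixing x and y). Then every element of {1,...,n} moved by P occurs as an entry of some transposition factor of σ; in particular σ has at least as many factors as the number of points moved by P. -/

import Mathlib

lemma stmt19_aux {L : List (ℕ × ℕ)} {a : ℕ}
    (h : ∀ p ∈ L, p.1 ≠ a ∧ p.2 ≠ a) :
    (L.map fun p => Equiv.swap p.1 p.2).prod a = a := by
  induction L with
  | nil => simp
  | cons p L ih =>
    simp only [List.map_cons, List.prod_cons, Equiv.Perm.mul_apply]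
    rw [ih (fun q hq => h q (List.mem_cons_of_mem _ hq))]
    exact Equiv.swap_apply_of_ne_of_ne (Ne.symm (h p List.mem_cons_self).1)
      (Ne.symm (h p List.mem_cons_self).2)

/-- If `P` is a nontrivial permutation supported on `{1,...,n}` and `σ` is a
product of transpositions in `S_{n+2}`, each moving `x = n+1` or `y = n+2`,
with `σ · P = 1`, then every point moved by `P` occurs as an entry of some
factor of `σ`; in particular `σ` has at least as many factors as the number of
points moved by `P`. -/
theorem stmt19 (n : ℕ) (P : Equiv.Perm ℕ) (hPnt : P ≠ 1)
    (hPsupp : ∀ a, P a ≠ a → a ∈ Finset.Icc 1 n)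
    (L : List (ℕ × ℕ))
    (hL : ∀ p ∈ L, p.1 ≠ p.2 ∧ p.1 ∈ Finset.Icc 1 (n + 2) ∧
      p.2 ∈ Finset.Icc 1 (n + 2) ∧
      (p.1 = n + 1 ∨ p.1 = n + 2 ∨ p.2 = n + 1 ∨ p.2 = n + 2))
    (hundo : (L.map fun p => Equiv.swap p.1 p.2).prod * P = 1) :
    (∀ a, P a ≠ a → ∃ p ∈ L, p.1 = a ∨ p.2 = a) ∧
    ((Finset.Icc 1 n).filter fun a => P a ≠ a).card ≤ L.length := by
  have hσ : (L.map fun p => Equiv.swap p.1 p.2).prod = P⁻¹ :=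
    eq_inv_of_mul_eq_one_left hundo
  have part1 : ∀ a, P a ≠ a → ∃ p ∈ L, p.1 = a ∨ p.2 = a := by
    intro a ha
    by_contra hcon
    push_neg at hcon
    have hfix := stmt19_aux (L := L) (a := a)
      (fun p hp => ⟨(hcon p hp).1, (hcon p hp).2⟩)
    rw [hσ] at hfix
    exact ha (by conv_lhs => rw [← hfix, show ∀ x, P (P⁻¹ x) = x from fun x => (Equiv.eq_symm_apply P).mp rfl])
  refine ⟨part1, ?_⟩
  classical
  have key : ∀ p ∈ L, ∀ a ∈ (Finset.Icc 1 n).filter (fun a => P a ≠ a),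
      ∀ b ∈ (Finset.Icc 1 n).filter (fun b => P b ≠ b),
      (p.1 = a ∨ p.2 = a) → (p.1 = b ∨ p.2 = b) → a = b := by
    intro p hp a ha b hb h1 h2
    obtain ⟨-, -, -, hc⟩ := hL p hp
    simp only [Finset.mem_filter, Finset.mem_Icc] at ha hb
    omega
  set f : ℕ → ℕ × ℕ := fun a =>
    if h : ∃ p ∈ L, p.1 = a ∨ p.2 = a then h.choose else (0, 0) with hf
  calc ((Finset.Icc 1 n).filter fun a => P a ≠ a).card
      ≤ L.toFinset.card := by
        apply Finset.card_le_card_of_injOn f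
        · intro a ha
          simp only [Finset.mem_coe, Finset.mem_filter] at ha
          have hex := part1 a ha.2
          simp only [hf, dif_pos hex]
          exact List.mem_toFinset.mpr hex.choose_spec.1
        · intro a ha b hb hab
          simp only [Finset.coe_filter, Set.mem_setOf_eq] at ha hb
          have hexa := part1 a (by
            simp only [Finset.mem_filter] at *; exact ha.2)
          have hexb := part1 b (by
            simp only [Finset.mem_filter] at *; exact hb.2)
          simp only [hf, dif_pos hexa, dif_pos hexb] at hab
          have hsa := hexa.choose_spec
          have hsb := hexb.choose_spec
          exact key _ hsa.1 a (Finset.mem_filter.mpr ha) b (Finset.mem_filter.mpr hb) hsa.2 (hab ▸ hsb.2)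
    _ ≤ L.length := L.toFinset_card_le
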